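/- Let L : ℝ → ℝ be a locally bounded measurable function of bounded variation on compacts with L(0) = 0 (a sample path of a Lévy process with finite variation), μ > 0, and suppose Z_t := e^{−μt} ∫_{−∞}^t e^{μs} dL(s) is well-defined (the improper Lebesgue–Stieltjes integral converges). Then Z satisfies the integral equation Z_t = Z_0 − μ ∫_0^t Z_s ds + L(t) for all t ≥ 0. -/

import Mathlib

open MeasureTheory Set

private lemma exp_int (μ : ℝ) (hμ : 0 < μ) (a b : ℝ) :
    ∫ s in a..b, μ * Real.exp (-μ*s) = Real.exp (-μ*a) - Real.exp (-μ*b) := by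
  have h : ∀ x ∈ uIcc a b, HasDerivAt (fun s => -Real.exp (-μ*s)) (μ * Real.exp (-μ*x)) x := by
    intro x _
    have h1 : HasDerivAt (fun s : ℝ => -μ*s) (-μ) x := by
      simpa using (hasDerivAt_id x).const_mul (-μ)
    have h2 : HasDerivAt (fun s => Real.exp (-μ*s)) (Real.exp (-μ*x) * (-μ)) x :=
      (Real.hasDerivAt_exp (-μ*x)).comp x h1
    exact (h2.neg : HasDerivAt (fun s => -Real.exp (-μ*s)) _ x).congr_deriv (by ring)
  have hInt : IntervalIntegrable (fun s => μ * Real.exp (-μ*s)) volume a b :=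
    Continuous.intervalIntegrable (continuous_const.mul (Real.continuous_exp.comp (continuous_const.mul continuous_id))) a b
  rw [intervalIntegral.integral_eq_sub_of_hasDerivAt h hInt]; ring

private lemma inner_calc (μ : ℝ) (hμ : 0 < μ) (t : ℝ) (ht : 0 ≤ t) (u : ℝ) :
    (∫ s in Ioc (0:ℝ) t, (μ * Real.exp (-μ*s)) * (Iic s).indicator (fun v => Real.exp (μ*v)) u)
    = (Iic t).indicator (fun u => Real.exp (μ*u) * Real.exp (-μ * max 0 u)
        - Real.exp (μ*u) * Real.exp (-μ*t)) u := by
  have hcong : ∀ s : ℝ, (μ * Real.exp (-μ*s)) * (Iic s).indicator (fun v => Real.exp (μ*v)) u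
      = (Ici u).indicator (fun s => μ * Real.exp (-μ*s) * Real.exp (μ*u)) s := by
    intro s
    by_cases hus : u ≤ s
    · simp only [Set.indicator_apply, mem_Iic, mem_Ici, hus, if_true]
    · simp only [Set.indicator_apply, mem_Iic, mem_Ici, hus, if_false, mul_zero]
  simp_rw [hcong]
  rw [integral_indicator measurableSet_Ici, Measure.restrict_restrict measurableSet_Ici]
  have hset : (Ici u ∩ Ioc 0 t : Set ℝ) =ᵐ[volume] Ioc (max 0 u) t := by
    rw [ae_eq_set]
    constructor
    · refine measure_mono_null ?_ (measure_singleton u)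
      intro x hx
      obtain ⟨⟨hxu, hx0t⟩, h2⟩ := hx
      have hxu' : u ≤ x := hxu
      have hx0t' := mem_Ioc.1 hx0t
      rw [mem_singleton_iff]
      by_contra hne
      exact h2 (mem_Ioc.2 ⟨max_lt_iff.2 ⟨hx0t'.1, lt_of_le_of_ne hxu' (Ne.symm hne)⟩, hx0t'.2⟩)
    · refine measure_mono_null ?_ measure_empty
      intro x hx
      obtain ⟨h1, h2⟩ := hx
      have h1' := mem_Ioc.1 h1
      have hm := max_lt_iff.1 h1'.1
      exact absurd (mem_inter (mem_Ici.2 hm.2.le) (mem_Ioc.2 ⟨hm.1, h1'.2⟩)) h2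
  rw [setIntegral_congr_set hset]
  by_cases hut : u ≤ t
  · simp only [Set.indicator_apply, mem_Iic, hut, if_true]
    have hle : max 0 u ≤ t := max_le ht hut
    rw [integral_mul_const, ← intervalIntegral.integral_of_le hle, exp_int μ hμ]
    ring
  · simp only [Set.indicator_apply, mem_Iic, hut, if_false]
    have : Ioc (max 0 u) t = ∅ :=
      Ioc_eq_empty (not_lt.2 (le_max_of_le_right (not_le.1 hut).le))
    rw [this]
    simp

/-- Key Fubini computation for a single Stieltjes function. -/
private lemma key (μ : ℝ) (hμ : 0 < μ) (F : StieltjesFunction ℝ)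
    (hFint : ∀ t : ℝ, IntegrableOn (fun s => Real.exp (μ * s)) (Iic t) F.measure)
    (t : ℝ) (ht : 0 ≤ t) :
    μ * ∫ s in (0:ℝ)..t, Real.exp (-μ*s) * ∫ u in Iic s, Real.exp (μ*u) ∂F.measure
      = (∫ u in Iic 0, Real.exp (μ*u) ∂F.measure) + (F t - F 0)
        - Real.exp (-μ*t) * ∫ u in Iic t, Real.exp (μ*u) ∂F.measure := by
  -- rewrite LHS as a set integral of a double integral
  have step1 : μ * ∫ s in (0:ℝ)..t, Real.exp (-μ*s) * ∫ u in Iic s, Real.exp (μ*u) ∂F.measure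
      = ∫ s in Ioc (0:ℝ) t, ∫ u, (μ * Real.exp (-μ*s)) *
          (Iic s).indicator (fun v => Real.exp (μ*v)) u ∂F.measure := by
    rw [intervalIntegral.integral_of_le ht, ← integral_const_mul]
    apply setIntegral_congr_fun measurableSet_Ioc
    intro s _
    dsimp only
    rw [integral_const_mul, integral_indicator measurableSet_Iic]
    ring
  rw [step1]
  -- Fubini
  have hInt : Integrable (Function.uncurry fun s u => (μ * Real.exp (-μ*s)) *
      (Iic s).indicator (fun v => Real.exp (μ*v)) u)
      ((volume.restrict (Ioc (0:ℝ) t)).prod F.measure) := by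
    have heq : (Function.uncurry fun s u => (μ * Real.exp (-μ*s)) *
        (Iic s).indicator (fun v => Real.exp (μ*v)) u)
        = {p : ℝ × ℝ | p.2 ≤ p.1}.indicator
            (fun p => μ * Real.exp (-μ*p.1) * Real.exp (μ*p.2)) := by
      funext p
      obtain ⟨s, u⟩ := p
      by_cases h : u ≤ s
      · simp only [Function.uncurry_apply_pair, Set.indicator_apply, mem_Iic, mem_setOf_eq, h,
          if_true]
      · simp only [Function.uncurry_apply_pair, Set.indicator_apply, mem_Iic, mem_setOf_eq, h,
          if_false, mul_zero]
    have hmeas : AEStronglyMeasurable (Function.uncurry fun s u => (μ * Real.exp (-μ*s)) *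
        (Iic s).indicator (fun v => Real.exp (μ*v)) u)
        ((volume.restrict (Ioc (0:ℝ) t)).prod F.measure) := by
      rw [heq]
      have hc : Continuous (fun p : ℝ × ℝ => μ * Real.exp (-μ*p.1) * Real.exp (μ*p.2)) :=
        ((continuous_const.mul (Real.continuous_exp.comp (continuous_const.mul continuous_fst))).mul
          (Real.continuous_exp.comp (continuous_const.mul continuous_snd)))
      exact ((Continuous.stronglyMeasurable hc).indicator
        (isClosed_le continuous_snd continuous_fst).measurableSet).aestronglyMeasurable
    -- dominating function
    have hf1 : Integrable (fun s => μ * Real.exp (-μ*s)) (volume.restrict (Ioc (0:ℝ) t)) := by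
      exact (continuous_const.mul (Real.continuous_exp.comp (continuous_const.mul continuous_id))).integrableOn_Ioc
    have hf2 : Integrable ((Iic t).indicator (fun v => Real.exp (μ*v))) F.measure :=
      (integrable_indicator_iff measurableSet_Iic).2 (hFint t)
    have hH : Integrable (fun p : ℝ × ℝ => (μ * Real.exp (-μ*p.1)) *
        (Iic t).indicator (fun v => Real.exp (μ*v)) p.2)
        ((volume.restrict (Ioc (0:ℝ) t)).prod F.measure) := hf1.mul_prod hf2
    apply Integrable.mono hH hmeas
    -- a.e. bound
    have hnull : ((volume.restrict (Ioc (0:ℝ) t)).prod F.measure)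
        ((Ioc (0:ℝ) t)ᶜ ×ˢ (univ : Set ℝ)) = 0 := by
      rw [Measure.prod_prod]
      simp [Measure.restrict_apply' measurableSet_Ioc]
    filter_upwards [measure_eq_zero_iff_ae_notMem.1 hnull] with p hp
    simp only [mem_prod, mem_compl_iff, mem_univ, and_true, not_not] at hp
    obtain ⟨s, u⟩ := p
    simp only [mem_Ioc] at hp
    by_cases h : u ≤ s
    · simp only [Function.uncurry_apply_pair, Set.indicator_apply, mem_Iic, h, h.trans hp.2,
        if_true, Real.norm_eq_abs]
      rw [show |μ * Real.exp (-μ*s) * Real.exp (μ*u)| = μ * Real.exp (-μ*s) * Real.exp (μ*u)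
        from abs_of_nonneg (by positivity)]
    · simp only [Function.uncurry_apply_pair, Set.indicator_apply, mem_Iic, h, if_false,
        mul_zero, Real.norm_eq_abs, abs_zero]
      positivity
  rw [integral_integral_swap hInt]
  -- compute inner integral
  have step2 : (∫ u, (∫ s in Ioc (0:ℝ) t, (μ * Real.exp (-μ*s)) *
        (Iic s).indicator (fun v => Real.exp (μ*v)) u) ∂F.measure)
      = ∫ u, (Iic t).indicator (fun u => Real.exp (μ*u) * Real.exp (-μ * max 0 u)
          - Real.exp (μ*u) * Real.exp (-μ*t)) u ∂F.measure := by
    congr 1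
    funext u
    exact inner_calc μ hμ t ht u
  rw [step2, integral_indicator measurableSet_Iic]
  -- split Iic t = Iic 0 ∪ Ioc 0 t
  have hsplit : (Iic t : Set ℝ) = Iic 0 ∪ Ioc 0 t := (Iic_union_Ioc_eq_Iic ht).symm
  have hintpsi : IntegrableOn (fun u => Real.exp (μ*u) * Real.exp (-μ * max 0 u)
      - Real.exp (μ*u) * Real.exp (-μ*t)) (Iic t) F.measure := by
    apply Integrable.sub
    · apply Integrable.mono (hFint t)
      · exact (Continuous.stronglyMeasurable ((Real.continuous_exp.comp (continuous_const.mul continuous_id)).mul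
          (Real.continuous_exp.comp (continuous_const.mul (continuous_const.max continuous_id))))).aestronglyMeasurable
      · filter_upwards with u
        have hn1 : (0:ℝ) ≤ Real.exp (μ*u) * Real.exp (-μ * max 0 u) := by positivity
        rw [Real.norm_eq_abs, Real.norm_eq_abs, abs_of_nonneg hn1,
          abs_of_nonneg (Real.exp_nonneg _)]
        nth_rewrite 2 [show Real.exp (μ*u) = Real.exp (μ*u) * 1 by ring]
        apply mul_le_mul_of_nonneg_left _ (Real.exp_nonneg _)
        rw [show (1:ℝ) = Real.exp 0 by simp]
        apply Real.exp_le_exp.2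
        have : 0 ≤ max 0 u := le_max_left 0 u
        nlinarith
    · exact (hFint t).mul_const _
  have hdisj : Disjoint (Iic (0:ℝ)) (Ioc 0 t) := Iic_disjoint_Ioc le_rfl
  rw [hsplit, setIntegral_union hdisj measurableSet_Ioc
    (hintpsi.mono_set (hsplit ▸ subset_union_left))
    (hintpsi.mono_set (hsplit ▸ subset_union_right))]
  -- evaluate on Iic 0
  have e1 : (∫ u in Iic (0:ℝ), (Real.exp (μ*u) * Real.exp (-μ * max 0 u)
        - Real.exp (μ*u) * Real.exp (-μ*t)) ∂F.measure)
      = (∫ u in Iic (0:ℝ), Real.exp (μ*u) ∂F.measure)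
        - Real.exp (-μ*t) * ∫ u in Iic (0:ℝ), Real.exp (μ*u) ∂F.measure := by
    rw [← integral_const_mul, ← integral_sub (hFint 0) (by exact ((hFint 0).const_mul _))]
    apply setIntegral_congr_fun measurableSet_Iic
    intro u hu
    dsimp only
    rw [max_eq_left (mem_Iic.1 hu), mul_zero, Real.exp_zero]
    ring
  -- evaluate on Ioc 0 t
  have e2 : (∫ u in Ioc (0:ℝ) t, (Real.exp (μ*u) * Real.exp (-μ * max 0 u)
        - Real.exp (μ*u) * Real.exp (-μ*t)) ∂F.measure)
      = (F t - F 0) - Real.exp (-μ*t) * ∫ u in Ioc (0:ℝ) t, Real.exp (μ*u) ∂F.measure := by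
    have hIoc : IntegrableOn (fun u => Real.exp (μ*u)) (Ioc (0:ℝ) t) F.measure :=
      (hFint t).mono_set Ioc_subset_Iic_self
    have h1 : (∫ u in Ioc (0:ℝ) t, (Real.exp (μ*u) * Real.exp (-μ * max 0 u)
          - Real.exp (μ*u) * Real.exp (-μ*t)) ∂F.measure)
        = ∫ u in Ioc (0:ℝ) t, (1 - Real.exp (μ*u) * Real.exp (-μ*t)) ∂F.measure := by
      apply setIntegral_congr_fun measurableSet_Ioc
      intro u hu
      dsimp only
      rw [max_eq_right (mem_Ioc.1 hu).1.le, ← Real.exp_add]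
      simp
    rw [h1, integral_sub (show IntegrableOn (fun _ => (1:ℝ)) (Ioc (0:ℝ) t) F.measure from integrableOn_const (by
        rw [F.measure_Ioc]; exact ENNReal.ofReal_ne_top)) (hIoc.mul_const _)]
    rw [setIntegral_const, ← integral_const_mul]
    have hmeas : (F.measure (Ioc 0 t)).toReal = F t - F 0 := by
      rw [F.measure_Ioc, ENNReal.toReal_ofReal (sub_nonneg.2 (F.mono ht))]
    rw [measureReal_def, hmeas]
    congr 1
    · simp
    · apply integral_congr_ae
      filter_upwards with u; ring
  rw [e1, e2]
  -- combine Iic t integral split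
  have e3 : (∫ u in Iic (0:ℝ) ∪ Ioc 0 t, Real.exp (μ*u) ∂F.measure)
      = (∫ u in Iic (0:ℝ), Real.exp (μ*u) ∂F.measure)
        + ∫ u in Ioc (0:ℝ) t, Real.exp (μ*u) ∂F.measure :=
    setIntegral_union hdisj measurableSet_Ioc
      ((hFint t).mono_set (hsplit ▸ subset_union_left))
      ((hFint t).mono_set (hsplit ▸ subset_union_right))
  rw [e3]
  ring

/-- pathwise version of Lemma 4.2(i). Let L = F − G be of bounded
variation on compacts (a difference of two Stieltjes functions), L(0) = 0, μ > 0,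
and let Z_t = e^{−μt} ∫_{−∞}^t e^{μs} dL(s) (a well-defined Lebesgue–Stieltjes
integral). Then Z_t = Z_0 − μ ∫_0^t Z_s ds + L(t) for all t ≥ 0. -/
theorem ornstein_uhlenbeck_pathwise (μ : ℝ) (hμ : 0 < μ)
    (F G : StieltjesFunction ℝ) (L : ℝ → ℝ)
    (hL : ∀ t, L t = F t - G t) (hL0 : L 0 = 0)
    (hFint : ∀ t : ℝ, IntegrableOn (fun s => Real.exp (μ * s)) (Iic t) F.measure)
    (hGint : ∀ t : ℝ, IntegrableOn (fun s => Real.exp (μ * s)) (Iic t) G.measure)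
    (Z : ℝ → ℝ)
    (hZ : ∀ t : ℝ, Z t = Real.exp (-μ * t) *
      ((∫ s in Iic t, Real.exp (μ * s) ∂F.measure)
        - ∫ s in Iic t, Real.exp (μ * s) ∂G.measure)) :
    ∀ t : ℝ, 0 ≤ t → Z t = Z 0 - μ * (∫ s in (0:ℝ)..t, Z s) + L t := by
  intro t ht
  set A : ℝ → ℝ := fun s => ∫ u in Iic s, Real.exp (μ * u) ∂F.measure with hA
  set B : ℝ → ℝ := fun s => ∫ u in Iic s, Real.exp (μ * u) ∂G.measure with hB
  -- monotonicity of A and B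
  have hAmono : Monotone A := by
    intro s1 s2 hs
    exact setIntegral_mono_set (hFint s2)
      (Filter.Eventually.of_forall (fun u => (Real.exp_nonneg _)))
      (HasSubset.Subset.eventuallyLE (Iic_subset_Iic.2 hs))
  have hBmono : Monotone B := by
    intro s1 s2 hs
    exact setIntegral_mono_set (hGint s2)
      (Filter.Eventually.of_forall (fun u => (Real.exp_nonneg _)))
      (HasSubset.Subset.eventuallyLE (Iic_subset_Iic.2 hs))
  -- interval integrability of Z on [0, t]
  have hZint : IntervalIntegrable Z volume 0 t := by
    have h1 : IntervalIntegrable (fun s => A s - B s) volume 0 t :=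
      ((hAmono.monotoneOn _).intervalIntegrable).sub ((hBmono.monotoneOn _).intervalIntegrable)
    have h2 : IntervalIntegrable (fun s => Real.exp (-μ*s) * (A s - B s)) volume 0 t :=
      h1.continuousOn_mul (Continuous.continuousOn (Real.continuous_exp.comp (continuous_const.mul continuous_id)))
    apply h2.congr
    intro s _
    exact (hZ s).symm
  -- split the integral of Z
  have hZsplit : ∫ s in (0:ℝ)..t, Z s
      = (∫ s in (0:ℝ)..t, Real.exp (-μ*s) * A s) - ∫ s in (0:ℝ)..t, Real.exp (-μ*s) * B s := by
    have hIA : IntervalIntegrable (fun s => Real.exp (-μ*s) * A s) volume 0 t :=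
      (hAmono.monotoneOn _).intervalIntegrable.continuousOn_mul
        (Continuous.continuousOn (Real.continuous_exp.comp (continuous_const.mul continuous_id)))
    have hIB : IntervalIntegrable (fun s => Real.exp (-μ*s) * B s) volume 0 t :=
      (hBmono.monotoneOn _).intervalIntegrable.continuousOn_mul
        (Continuous.continuousOn (Real.continuous_exp.comp (continuous_const.mul continuous_id)))
    rw [← intervalIntegral.integral_sub hIA hIB]
    apply intervalIntegral.integral_congr
    intro s _
    rw [hZ s]
    ring
  have kF := key μ hμ F hFint t ht
  have kG := key μ hμ G hGint t ht
  have hμtF : μ * ∫ s in (0:ℝ)..t, Real.exp (-μ*s) * A s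
      = A 0 + (F t - F 0) - Real.exp (-μ*t) * A t := kF
  have hμtG : μ * ∫ s in (0:ℝ)..t, Real.exp (-μ*s) * B s
      = B 0 + (G t - G 0) - Real.exp (-μ*t) * B t := kG
  have hZt : Z t = Real.exp (-μ*t) * (A t - B t) := hZ t
  have hZ0 : Z 0 = A 0 - B 0 := by rw [hZ 0]; simp; rfl
  have hFG0 : F 0 - G 0 = 0 := by rw [← hL 0]; exact hL0
  rw [hZsplit, hZt, hZ0, hL t]
  linarith [hμtF, hμtG]
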